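/- Let H = L²((-1,1), ℂ) with Lebesgue measure and let A ∈ B(H) be the multiplication operator (Af)(t) = t f(t). Then there exist orthogonal projections P, Q on H with P - Q = A; moreover ker A = {0} and ker(1 - A²) = {0}, so any such pair (P, Q) is in generic position. -/

import Mathlib

open MeasureTheory ContinuousLinearMap

/-- Lebesgue measure restricted to the interval `(-1, 1)`. -/
noncomputable def lebIoo : Measure ℝ := volume.restrict (Set.Ioo (-1 : ℝ) 1)

/-- The Hilbert space `L²((-1,1), ℂ)`. -/
noncomputable abbrev L2I : Type := Lp ℂ 2 lebIoo

/-- An orthogonal projection: a selfadjoint idempotent bounded operator. -/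
def IsOrthogonalProjection (P : L2I →L[ℂ] L2I) : Prop :=
  IsSelfAdjoint P ∧ P * P = P

/-- Two orthogonal projections are in generic position if the four canonical intersections
of their ranges and kernels are trivial. -/
def GenericPosition (P Q : L2I →L[ℂ] L2I) : Prop :=
  LinearMap.range (P : L2I →ₗ[ℂ] L2I) ⊓ LinearMap.range (Q : L2I →ₗ[ℂ] L2I) = ⊥ ∧
  LinearMap.range (P : L2I →ₗ[ℂ] L2I) ⊓ LinearMap.ker (Q : L2I →ₗ[ℂ] L2I) = ⊥ ∧
  LinearMap.ker (P : L2I →ₗ[ℂ] L2I) ⊓ LinearMap.range (Q : L2I →ₗ[ℂ] L2I) = ⊥ ∧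
  LinearMap.ker (P : L2I →ₗ[ℂ] L2I) ⊓ LinearMap.ker (Q : L2I →ₗ[ℂ] L2I) = ⊥

lemma negMP : MeasurePreserving (fun t : ℝ => -t) lebIoo lebIoo := by
  have h := (Measure.measurePreserving_neg (volume : Measure ℝ)).restrict_preimage
      (s := Set.Ioo (-1 : ℝ) 1) measurableSet_Ioo
  have hpre : (Neg.neg : ℝ → ℝ) ⁻¹' Set.Ioo (-1 : ℝ) 1 = Set.Ioo (-1 : ℝ) 1 := by
    ext x; simp [Set.mem_Ioo, and_comm, neg_lt, lt_neg]
  simpa [lebIoo, hpre] using h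

noncomputable def sC : ℝ → ℂ := fun t => ((Real.sqrt (1 - t ^ 2) : ℝ) : ℂ)

lemma sC_cont : Continuous sC := by
  exact Complex.continuous_ofReal.comp ((continuous_const.sub (continuous_pow 2)).sqrt)

lemma sC_norm_le (t : ℝ) : ‖sC t‖ ≤ 1 := by
  simp only [sC, Complex.norm_real, Real.norm_eq_abs, abs_of_nonneg (Real.sqrt_nonneg _)]
  rcases le_or_gt (1 - t ^ 2) 0 with h | h
  · simp [Real.sqrt_eq_zero_of_nonpos h]
  · have := Real.sqrt_le_sqrt (show 1 - t ^ 2 ≤ 1 by nlinarith)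
    simpa using this

lemma memC (f : L2I) : MemLp (fun t : ℝ => sC t * f (-t)) 2 lebIoo := by
  have hm : AEStronglyMeasurable (fun t : ℝ => f (-t)) lebIoo :=
    (Lp.aestronglyMeasurable f).comp_quasiMeasurePreserving negMP.quasiMeasurePreserving
  have hmem : MemLp (fun t : ℝ => f (-t)) 2 lebIoo :=
    (Lp.memLp f).comp_measurePreserving negMP
  refine hmem.of_le (sC_cont.aestronglyMeasurable.mul hm) ?_
  filter_upwards with t
  calc ‖sC t * f (-t)‖ = ‖sC t‖ * ‖f (-t)‖ := norm_mul _ _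
  _ ≤ 1 * ‖f (-t)‖ := by gcongr; exact sC_norm_le t
  _ = ‖f (-t)‖ := one_mul _

lemma ae_comp_neg {g h : ℝ → ℂ} (H : g =ᵐ[lebIoo] h) :
    (fun t : ℝ => g (-t)) =ᵐ[lebIoo] fun t : ℝ => h (-t) :=
  negMP.quasiMeasurePreserving.ae_eq_comp H

noncomputable def Cop : L2I →L[ℂ] L2I :=
  LinearMap.mkContinuous
    { toFun := fun f => (memC f).toLp _
      map_add' := by
        intro f g
        apply Lp.ext
        filter_upwards [(memC (f + g)).coeFn_toLp,
          Lp.coeFn_add ((memC f).toLp _) ((memC g).toLp _),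
          (memC f).coeFn_toLp, (memC g).coeFn_toLp,
          ae_comp_neg (Lp.coeFn_add f g)] with t h1 h2 h3 h4 h5
        simp only [h1, h2, Pi.add_apply, h3, h4, h5, mul_add]
      map_smul' := by
        intro c f
        apply Lp.ext
        filter_upwards [(memC (c • f)).coeFn_toLp,
          Lp.coeFn_smul c ((memC f).toLp _),
          (memC f).coeFn_toLp,
          ae_comp_neg (Lp.coeFn_smul c f)] with t h1 h2 h3 h5
        simp only [h1, RingHom.id_apply, h2, Pi.smul_apply, h3, h5, smul_eq_mul]
        ring } 1
    (by
      intro f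
      simp only [LinearMap.coe_mk, AddHom.coe_mk, one_mul]
      rw [Lp.norm_toLp, Lp.norm_def]
      gcongr
      · exact (Lp.memLp f).eLpNorm_ne_top
      calc eLpNorm (fun t : ℝ => sC t * f (-t)) 2 lebIoo
          ≤ eLpNorm (fun t : ℝ => f (-t)) 2 lebIoo := by
            refine eLpNorm_mono_ae ?_
            filter_upwards with t
            calc ‖sC t * f (-t)‖ = ‖sC t‖ * ‖f (-t)‖ := norm_mul _ _
            _ ≤ 1 * ‖f (-t)‖ := by gcongr; exact sC_norm_le t
            _ = ‖f (-t)‖ := one_mul _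
        _ = eLpNorm (f : ℝ → ℂ) 2 lebIoo :=
            eLpNorm_comp_measurePreserving (Lp.aestronglyMeasurable f) negMP)

lemma Cop_ae (f : L2I) : (Cop f : ℝ → ℂ) =ᵐ[lebIoo] fun t : ℝ => sC t * f (-t) :=
  (memC f).coeFn_toLp

lemma sC_neg (t : ℝ) : sC (-t) = sC t := by simp [sC]

lemma sC_conj (t : ℝ) : (starRingEnd ℂ) (sC t) = sC t := Complex.conj_ofReal _

open scoped InnerProductSpace in
lemma Cop_sa : IsSelfAdjoint Cop := by
  rw [ContinuousLinearMap.isSelfAdjoint_iff_isSymmetric]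
  intro f g
  have h1 : ⟪Cop f, g⟫_ℂ = ∫ t, (starRingEnd ℂ) (f (-t)) * (sC (-t) * g t) ∂lebIoo := by
    rw [MeasureTheory.L2.inner_def]
    refine integral_congr_ae ?_
    filter_upwards [Cop_ae f] with t ht
    rw [RCLike.inner_apply, ht, sC_neg, map_mul, sC_conj]
    ring
  have h2 : ⟪f, Cop g⟫_ℂ = ∫ t, (starRingEnd ℂ) (f t) * (sC t * g (-t)) ∂lebIoo := by
    rw [MeasureTheory.L2.inner_def]
    refine integral_congr_ae ?_
    filter_upwards [Cop_ae g] with t ht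
    rw [RCLike.inner_apply, ht]
    ring
  have h3 : ∫ t, (starRingEnd ℂ) (f t) * (sC t * g (-t)) ∂lebIoo
      = ∫ t, (starRingEnd ℂ) (f (-t)) * (sC (-t) * g (- -t)) ∂lebIoo :=
    (negMP.integral_comp (Homeomorph.neg ℝ).measurableEmbedding
      (fun t => (starRingEnd ℂ) (f t) * (sC t * g (-t)))).symm
  simp only [ContinuousLinearMap.coe_coe]
  rw [h1, h2, h3]
  simp only [neg_neg]

section WithA
variable (A : L2I →L[ℂ] L2I)
  (hA : ∀ f : L2I, (A f : ℝ → ℂ) =ᵐ[lebIoo] fun t => (t : ℂ) * f t)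

open scoped InnerProductSpace in
include hA in
lemma A_sa : IsSelfAdjoint A := by
  rw [ContinuousLinearMap.isSelfAdjoint_iff_isSymmetric]
  intro f g
  simp only [ContinuousLinearMap.coe_coe]
  rw [MeasureTheory.L2.inner_def, MeasureTheory.L2.inner_def]
  refine integral_congr_ae ?_
  filter_upwards [hA f, hA g] with t h1 h2
  rw [RCLike.inner_apply, RCLike.inner_apply, h1, h2, map_mul, Complex.conj_ofReal]
  ring

include hA in
lemma anticomm : A * Cop + Cop * A = 0 := by
  ext f
  filter_upwards [Lp.coeFn_add (A (Cop f)) (Cop (A f)), hA (Cop f), Cop_ae f,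
    Cop_ae (A f), ae_comp_neg (hA f), Lp.coeFn_zero ℂ 2 lebIoo] with t h1 h2 h3 h4 h5 h6
  simp only [ContinuousLinearMap.add_apply, ContinuousLinearMap.mul_apply,
    ContinuousLinearMap.zero_apply, h1, Pi.add_apply, h2, h3, h4, h5, h6, Pi.zero_apply]
  push_cast
  ring

include hA in
lemma sum_sq : A * A + Cop * Cop = 1 := by
  ext f
  have hmem : ∀ᵐ t ∂lebIoo, t ∈ Set.Ioo (-1 : ℝ) 1 :=
    ae_restrict_mem measurableSet_Ioo
  filter_upwards [Lp.coeFn_add (A (A f)) (Cop (Cop f)), hA (A f), hA f,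
    Cop_ae (Cop f), ae_comp_neg (Cop_ae f), hmem] with t h1 h2 h3 h4 h5 ht
  simp only [ContinuousLinearMap.add_apply, ContinuousLinearMap.mul_apply,
    ContinuousLinearMap.one_apply, h1, Pi.add_apply, h2, h3, h4, h5]
  simp only [neg_neg, sC_neg]
  have hsq : sC t * sC t = ((1 - t ^ 2 : ℝ) : ℂ) := by
    rw [sC, ← Complex.ofReal_mul, Real.mul_self_sqrt (by nlinarith [ht.1, ht.2])]
  calc (t : ℂ) * ((t : ℂ) * f t) + sC t * (sC t * f t)
      = ((t : ℂ) * (t : ℂ) + sC t * sC t) * f t := by ring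
    _ = f t := by rw [hsq]; push_cast; ring_nf
end WithA

section Kernels
variable (A : L2I →L[ℂ] L2I)
  (hA : ∀ f : L2I, (A f : ℝ → ℂ) =ᵐ[lebIoo] fun t => (t : ℂ) * f t)

lemma ae_mem_Ioo : ∀ᵐ t ∂lebIoo, t ∈ Set.Ioo (-1 : ℝ) 1 :=
  ae_restrict_mem measurableSet_Ioo

include hA in
lemma kerA_bot : LinearMap.ker (A : L2I →ₗ[ℂ] L2I) = ⊥ := by
  rw [Submodule.eq_bot_iff]
  intro f hf
  rw [LinearMap.mem_ker, ContinuousLinearMap.coe_coe] at hf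
  have h2 : (A f : ℝ → ℂ) =ᵐ[lebIoo] 0 := by rw [hf]; exact Lp.coeFn_zero _ _ _
  have hne : ∀ᵐ t ∂lebIoo, t ≠ 0 := by
    refine ae_iff.mpr ?_
    have hs : {t : ℝ | ¬ t ≠ 0} = {0} := by ext t; simp
    rw [hs, lebIoo, Measure.restrict_apply (measurableSet_singleton 0)]
    exact measure_mono_null Set.inter_subset_left Real.volume_singleton
  apply Lp.ext
  filter_upwards [hA f, h2, hne, Lp.coeFn_zero ℂ 2 lebIoo] with t h1 h2 h3 h4
  rw [h4]
  have := h1.symm.trans h2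
  simp only [Pi.zero_apply] at this ⊢
  rcases mul_eq_zero.mp this with h | h
  · exact absurd (Complex.ofReal_eq_zero.mp h) h3
  · exact h

include hA in
lemma ker1A_bot : LinearMap.ker ((1 - A * A : L2I →L[ℂ] L2I) : L2I →ₗ[ℂ] L2I) = ⊥ := by
  rw [Submodule.eq_bot_iff]
  intro f hf
  rw [LinearMap.mem_ker, ContinuousLinearMap.coe_coe] at hf
  have h2 : ((1 - A * A) f : ℝ → ℂ) =ᵐ[lebIoo] 0 := by rw [hf]; exact Lp.coeFn_zero _ _ _
  apply Lp.ext
  filter_upwards [hA f, hA (A f), h2, ae_mem_Ioo,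
    Lp.coeFn_sub (f : L2I) (A (A f)), Lp.coeFn_zero ℂ 2 lebIoo] with t h1 hAA hz ht hsub h4
  rw [h4]
  have hz' : (f : ℝ → ℂ) t - (A (A f) : ℝ → ℂ) t = 0 := by
    have : ((1 - A * A) f : ℝ → ℂ) t = (f : ℝ → ℂ) t - (A (A f) : ℝ → ℂ) t := by
      have he : (1 - A * A) f = f - A (A f) := by
        simp [ContinuousLinearMap.sub_apply, ContinuousLinearMap.mul_apply]
      rw [he]; exact hsub
    rw [← this, hz]; rfl
  rw [hAA, h1] at hz'
  have hfac : (1 - (t : ℂ) ^ 2) * (f : ℝ → ℂ) t = 0 := by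
    rw [← hz']; ring
  have hne : (1 - (t : ℂ) ^ 2) ≠ 0 := by
    intro hc
    have : (t : ℂ) ^ 2 = 1 := by linear_combination -hc
    have ht2 : t ^ 2 = 1 := by exact_mod_cast this
    nlinarith [ht.1, ht.2]
  simpa [Pi.zero_apply] using (mul_eq_zero.mp hfac).resolve_left hne

end Kernels

/-- Let `A` be the multiplication operator `(Af)(t) = t f(t)` on
`L²((-1,1), ℂ)`. Then `A` is a difference of orthogonal projections, `ker A = 0`,
`ker (1 - A²) = 0`, and every pair of orthogonal projections with difference `A` is in
generic position. -/
theorem multiplication_operator_generic (A : L2I →L[ℂ] L2I)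
    (hA : ∀ f : L2I, (A f : ℝ → ℂ) =ᵐ[lebIoo] fun t => (t : ℂ) * f t) :
    (∃ P Q : L2I →L[ℂ] L2I,
      IsOrthogonalProjection P ∧ IsOrthogonalProjection Q ∧ P - Q = A) ∧
    LinearMap.ker (A : L2I →ₗ[ℂ] L2I) = ⊥ ∧
    LinearMap.ker ((1 - A * A : L2I →L[ℂ] L2I) : L2I →ₗ[ℂ] L2I) = ⊥ ∧
    ∀ P Q : L2I →L[ℂ] L2I, IsOrthogonalProjection P → IsOrthogonalProjection Q →
      P - Q = A → GenericPosition P Q := by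
  have hkerA := kerA_bot A hA
  have hker1 := ker1A_bot A hA
  have hAsa := A_sa A hA
  have hzero : ∀ x : L2I, A x = 0 → x = 0 := by
    intro x hx
    have : x ∈ LinearMap.ker (A : L2I →ₗ[ℂ] L2I) := LinearMap.mem_ker.mpr hx
    rw [hkerA] at this
    exact Submodule.mem_bot ℂ |>.mp this
  have hone : ∀ x : L2I, A (A x) = x → x = 0 := by
    intro x hx
    have : x ∈ LinearMap.ker ((1 - A * A : L2I →L[ℂ] L2I) : L2I →ₗ[ℂ] L2I) := by
      rw [LinearMap.mem_ker]
      simp [ContinuousLinearMap.sub_apply, ContinuousLinearMap.mul_apply, hx]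
    rw [hker1] at this
    exact Submodule.mem_bot ℂ |>.mp this
  refine ⟨?_, hkerA, hker1, ?_⟩
  · -- existence of P, Q
    have hB : (A + Cop) * (A + Cop) = 1 := by
      have h1 := sum_sq A hA
      have h2 := anticomm A hA
      calc (A + Cop) * (A + Cop) = (A * A + Cop * Cop) + (A * Cop + Cop * A) := by
            noncomm_ring
        _ = 1 + 0 := by rw [h1, h2]
        _ = 1 := add_zero 1
    have hB' : (A - Cop) * (A - Cop) = 1 := by
      have h1 := sum_sq A hA
      have h2 := anticomm A hA
      calc (A - Cop) * (A - Cop) = (A * A + Cop * Cop) - (A * Cop + Cop * A) := by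
            noncomm_ring
        _ = 1 - 0 := by rw [h1, h2]
        _ = 1 := sub_zero 1
    refine ⟨(2⁻¹ : ℂ) • (1 + (A + Cop)), (2⁻¹ : ℂ) • (1 - (A - Cop)), ⟨?_, ?_⟩, ⟨?_, ?_⟩, ?_⟩
    · exact IsSelfAdjoint.smul (by simp : star (2⁻¹ : ℂ) = 2⁻¹) ((IsSelfAdjoint.one (L2I →L[ℂ] L2I)).add (hAsa.add Cop_sa))
    · rw [smul_mul_smul_comm]
      have : (1 + (A + Cop)) * (1 + (A + Cop)) = (2 : ℂ) • (1 + (A + Cop)) := by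
        calc (1 + (A + Cop)) * (1 + (A + Cop))
            = 1 + (A + Cop) + (A + Cop) + (A + Cop) * (A + Cop) := by noncomm_ring
          _ = 1 + (A + Cop) + (A + Cop) + 1 := by rw [hB]
          _ = (2 : ℂ) • (1 + (A + Cop)) := by module
      rw [this, smul_smul]
      norm_num
    · exact IsSelfAdjoint.smul (by simp : star (2⁻¹ : ℂ) = 2⁻¹) ((IsSelfAdjoint.one (L2I →L[ℂ] L2I)).sub (hAsa.sub Cop_sa))
    · rw [smul_mul_smul_comm]
      have : (1 - (A - Cop)) * (1 - (A - Cop)) = (2 : ℂ) • (1 - (A - Cop)) := by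
        calc (1 - (A - Cop)) * (1 - (A - Cop))
            = 1 - (A - Cop) - (A - Cop) + (A - Cop) * (A - Cop) := by noncomm_ring
          _ = 1 - (A - Cop) - (A - Cop) + 1 := by rw [hB']
          _ = (2 : ℂ) • (1 - (A - Cop)) := by module
      rw [this, smul_smul]
      norm_num
    · module
  · -- generic position
    intro P Q hP hQ hPQ
    have hPfix : ∀ x : L2I, x ∈ LinearMap.range (P : L2I →ₗ[ℂ] L2I) → P x = x := by
      rintro x ⟨y, rfl⟩
      rw [ContinuousLinearMap.coe_coe]
      have : P (P y) = (P * P) y := rfl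
      rw [this, hP.2]
    have hQfix : ∀ x : L2I, x ∈ LinearMap.range (Q : L2I →ₗ[ℂ] L2I) → Q x = x := by
      rintro x ⟨y, rfl⟩
      rw [ContinuousLinearMap.coe_coe]
      have : Q (Q y) = (Q * Q) y := rfl
      rw [this, hQ.2]
    have hAx : ∀ x : L2I, A x = P x - Q x := by
      intro x; rw [← hPQ]; rfl
    refine ⟨?_, ?_, ?_, ?_⟩ <;> rw [Submodule.eq_bot_iff] <;> intro x hx <;>
      rw [Submodule.mem_inf] at hx
    · exact hzero x (by rw [hAx, hPfix x hx.1, hQfix x hx.2, sub_self])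
    · have h1 : A x = x := by
        rw [hAx, hPfix x hx.1, (show Q x = 0 from LinearMap.mem_ker.mp hx.2), sub_zero]
      exact hone x (by rw [h1, h1])
    · have h1 : A x = -x := by
        rw [hAx, (show P x = 0 from LinearMap.mem_ker.mp hx.1), hQfix x hx.2, zero_sub]
      exact hone x (by rw [h1, map_neg, h1, neg_neg])
    · exact hzero x (by rw [hAx, (show P x = 0 from LinearMap.mem_ker.mp hx.1), (show Q x = 0 from LinearMap.mem_ker.mp hx.2), sub_self])
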